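/- arXiv:2005.13189 — 4 statements merged into one kernel-verified Lean document; each statement's English description precedes it below -/
import Mathlib

section
/- Let $n \geq 1$ and $d \geq 1$. For $i = 1, \dots, n$ let $f_i : \mathbb{R}^d \to \mathbb{R}$ be convex and differentiable with $\|\nabla f_i(x)\| \leq D'$ for all $x \in \mathbb{R}^d$, let $f = \frac{1}{n}\sum_{i=1}^n f_i$, let $x^* \in \mathbb{R}^d$ and $f^* = f(x^*)$. Let $\alpha_k \geq 0$ be a sequence of stepsizes, let $z_i^k \in \mathbb{R}^d$ for $i = 1,\dots,n$ and $k \geq 0$, and let $\bar z^k \in \mathbb{R}^d$ satisfy the averaged dynamics $\bar z^{k+1} = \bar z^k - \frac{\alpha_k}{n}\sum_{i=1}^n \nabla f_i(z_i^k)$ for all $k$. Then for every $T \geq 0$: $2\sum_{k=0}^T \alpha_k\,(f(\bar z^k) - f^*) \leq \|\bar z^0 - x^*\|^2 + D'^2 \sum_{k=0}^T \alpha_k^2 + \frac{4D'}{n}\sum_{k=0}^T \alpha_k \sum_{i=1}^n \|z_i^k - \bar z^k\|$. -/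
open Finset

lemma grad_ineq {E : Type*} [NormedAddCommGroup E] [InnerProductSpace ℝ E] [CompleteSpace E]
    (f : E → ℝ) (hc : ConvexOn ℝ Set.univ f) (hf : Differentiable ℝ f) (x y : E) :
    f x + inner ℝ (gradient f x) (y - x) ≤ f y := by
  set g : ℝ → ℝ := fun t => f (x + t • (y - x)) with hg_def
  have hg : ConvexOn ℝ Set.univ g := by
    have h := hc.comp_affineMap (AffineMap.lineMap x y)
    have e : g = f ∘ (AffineMap.lineMap x y : ℝ →ᵃ[ℝ] E) := by
      funext t
      simp [hg_def, AffineMap.lineMap_apply_module', add_comm]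
    rw [e]
    simpa using h
  have h2 : HasDerivAt (fun t : ℝ => x + t • (y - x)) (y - x) 0 := by
    simpa using ((hasDerivAt_id (0:ℝ)).smul_const (y - x)).const_add x
  have h1' : HasFDerivAt f (InnerProductSpace.toDual ℝ E (gradient f x)) (x + (0:ℝ) • (y - x)) := by
    simpa using ((hf x).hasGradientAt).hasFDerivAt
  have hd : HasDerivAt g (inner ℝ (gradient f x) (y - x) : ℝ) 0 := by
    have := h1'.comp_hasDerivAt 0 h2
    rw [InnerProductSpace.toDual_apply_apply] at this
    exact this
  have hs := hg.le_slope_of_hasDerivAt (Set.mem_univ (0:ℝ)) (Set.mem_univ (1:ℝ)) one_pos hd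
  have h00 : g 0 = f x := by simp [hg_def]
  have h10 : g 1 = f y := by simp [hg_def]
  rw [slope_def_field] at hs
  simp [h00, h10] at hs ⊢
  linarith

/-- Core inequality of Theorem 1: the averaged dynamics of the decentralized
algorithm over `T+1` steps. -/
theorem stmt_0 (n d : ℕ) (hn : 1 ≤ n) (hd : 1 ≤ d)
    (f : Fin n → EuclideanSpace ℝ (Fin d) → ℝ)
    (hconv : ∀ i, ConvexOn ℝ Set.univ (f i))
    (hdiff : ∀ i, Differentiable ℝ (f i))
    (D' : ℝ) (hD : ∀ i x, ‖gradient (f i) x‖ ≤ D')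
    (F : EuclideanSpace ℝ (Fin d) → ℝ)
    (hF : ∀ x, F x = (1 / (n : ℝ)) * ∑ i, f i x)
    (xstar : EuclideanSpace ℝ (Fin d))
    (α : ℕ → ℝ) (hα : ∀ k, 0 ≤ α k)
    (z : ℕ → Fin n → EuclideanSpace ℝ (Fin d))
    (zbar : ℕ → EuclideanSpace ℝ (Fin d))
    (hdyn : ∀ k, zbar (k + 1) = zbar k - (α k / n) • ∑ i, gradient (f i) (z k i))
    (T : ℕ) :
    2 * ∑ k ∈ range (T + 1), α k * (F (zbar k) - F xstar) ≤
      ‖zbar 0 - xstar‖ ^ 2 + D' ^ 2 * ∑ k ∈ range (T + 1), α k ^ 2 +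
        (4 * D' / n) * ∑ k ∈ range (T + 1), α k * ∑ i, ‖z k i - zbar k‖ := by
  have hn0 : (0:ℝ) < n := by exact_mod_cast hn
  have hD0 : 0 ≤ D' := le_trans (norm_nonneg _) (hD ⟨0, hn⟩ 0)
  have key : ∀ k, 2 * (α k * (F (zbar k) - F xstar)) ≤
      (‖zbar k - xstar‖ ^ 2 - ‖zbar (k+1) - xstar‖ ^ 2) + D' ^ 2 * α k ^ 2 +
      (4 * D' / n) * (α k * ∑ i, ‖z k i - zbar k‖) := by
    intro k
    set a := zbar k - xstar with ha
    set G := ∑ i, gradient (f i) (z k i) with hG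
    set S := ∑ i, ‖z k i - zbar k‖ with hS
    have hstep : zbar (k+1) - xstar = a - (α k / n) • G := by
      rw [hdyn k, ha]; abel
    have hnorm : ‖zbar (k+1) - xstar‖^2 =
        ‖a‖^2 - 2 * inner ℝ a ((α k / n) • G) + ‖(α k / n) • G‖^2 := by
      rw [hstep]; exact norm_sub_sq_real a _
    have hGnorm : ‖G‖ ≤ n * D' := by
      calc ‖G‖ ≤ ∑ i, ‖gradient (f i) (z k i)‖ := norm_sum_le _ _
        _ ≤ ∑ _i : Fin n, D' := Finset.sum_le_sum fun i _ => hD i _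
        _ = n * D' := by simp [mul_comm]
    have hgn : ‖(α k / n) • G‖ ≤ α k * D' := by
      rw [norm_smul, Real.norm_eq_abs, abs_of_nonneg (div_nonneg (hα k) hn0.le)]
      calc α k / n * ‖G‖ ≤ α k / n * (n * D') :=
            mul_le_mul_of_nonneg_left hGnorm (div_nonneg (hα k) hn0.le)
        _ = α k * D' := by field_simp
    have hgsq : ‖(α k / n) • G‖^2 ≤ D'^2 * α k ^2 := by
      nlinarith [norm_nonneg ((α k / n) • G), mul_nonneg (hα k) hD0]
    have hiner : ∀ i : Fin n, f i (zbar k) - f i xstar - 2*D'*‖z k i - zbar k‖ ≤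
        (inner ℝ a (gradient (f i) (z k i)) : ℝ) := by
      intro i
      set v := gradient (f i) (z k i) with hv
      have h1 : f i (z k i) + (inner ℝ v (xstar - z k i) : ℝ) ≤ f i xstar :=
        grad_ineq (f i) (hconv i) (hdiff i) (z k i) xstar
      have h2 : f i (zbar k) + (inner ℝ (gradient (f i) (zbar k)) (z k i - zbar k) : ℝ) ≤ f i (z k i) :=
        grad_ineq (f i) (hconv i) (hdiff i) (zbar k) (z k i)
      have hcs2 : |(inner ℝ (gradient (f i) (zbar k)) (z k i - zbar k) : ℝ)| ≤ D' * ‖z k i - zbar k‖ :=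
        le_trans (abs_real_inner_le_norm _ _)
          (mul_le_mul_of_nonneg_right (hD i _) (norm_nonneg _))
      have hcs3 : |(inner ℝ v (zbar k - z k i) : ℝ)| ≤ D' * ‖z k i - zbar k‖ := by
        rw [← norm_sub_rev (zbar k) (z k i)]
        exact le_trans (abs_real_inner_le_norm _ _)
          (mul_le_mul_of_nonneg_right (hD i _) (norm_nonneg _))
      have e0 : z k i - xstar + (zbar k - z k i) = a := by rw [ha]; abel
      have e1 : (inner ℝ v a : ℝ) = inner ℝ v (z k i - xstar) + inner ℝ v (zbar k - z k i) := by
        rw [← inner_add_right, e0]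
      have e2 : (inner ℝ v (z k i - xstar) : ℝ) = -(inner ℝ v (xstar - z k i)) := by
        rw [← inner_neg_right, neg_sub]
      have e3 : (inner ℝ a v : ℝ) = inner ℝ v a := real_inner_comm v a
      have b2 := neg_abs_le (inner ℝ (gradient (f i) (zbar k)) (z k i - zbar k) : ℝ)
      have b3 := neg_abs_le (inner ℝ v (zbar k - z k i) : ℝ)
      linarith
    have hinsum : (inner ℝ a G : ℝ) = ∑ i, (inner ℝ a (gradient (f i) (z k i)) : ℝ) := by
      rw [hG, inner_sum]
    have hsum2 : ∑ i, (f i (zbar k) - f i xstar - 2*D'*‖z k i - zbar k‖) ≤ (inner ℝ a G : ℝ) := by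
      rw [hinsum]; exact Finset.sum_le_sum fun i _ => hiner i
    have hsum3 : ∑ i, (f i (zbar k) - f i xstar - 2*D'*‖z k i - zbar k‖)
        = (∑ i, f i (zbar k)) - (∑ i, f i xstar) - 2*D'*S := by
      rw [Finset.sum_sub_distrib, Finset.sum_sub_distrib, ← Finset.mul_sum, hS]
    have hFz : (n:ℝ) * (F (zbar k) - F xstar) = (∑ i, f i (zbar k)) - (∑ i, f i xstar) := by
      rw [hF, hF]; field_simp
    have hlow0 : (n:ℝ) * (F (zbar k) - F xstar) - 2*D'*S ≤ (inner ℝ a G : ℝ) := by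
      rw [hFz]; rw [hsum3] at hsum2; linarith
    have hlow : (α k / n) * ((n:ℝ) * (F (zbar k) - F xstar) - 2*D'*S)
        ≤ (α k / n) * (inner ℝ a G : ℝ) :=
      mul_le_mul_of_nonneg_left hlow0 (div_nonneg (hα k) hn0.le)
    have hsmul : (inner ℝ a ((α k / n) • G) : ℝ) = (α k / n) * (inner ℝ a G : ℝ) :=
      real_inner_smul_right a G _
    have hcalc : (α k / n) * ((n:ℝ) * (F (zbar k) - F xstar) - 2*D'*S)
        = α k * (F (zbar k) - F xstar) - (α k / n) * (2*D'*S) := by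
      field_simp
    have hq : (4 * D' / n) * (α k * S) = 2 * ((α k / n) * (2*D'*S)) := by
      field_simp; ring
    linarith
  have hsum := Finset.sum_le_sum (fun k (_ : k ∈ range (T+1)) => key k)
  have htel : ∑ k ∈ range (T+1), (‖zbar k - xstar‖ ^ 2 - ‖zbar (k+1) - xstar‖ ^ 2)
      = ‖zbar 0 - xstar‖ ^ 2 - ‖zbar (T+1) - xstar‖ ^ 2 :=
    Finset.sum_range_sub' (fun k => ‖zbar k - xstar‖ ^ 2) (T+1)
  rw [Finset.mul_sum]
  calc ∑ k ∈ range (T+1), 2 * (α k * (F (zbar k) - F xstar))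
      ≤ ∑ k ∈ range (T+1), ((‖zbar k - xstar‖ ^ 2 - ‖zbar (k+1) - xstar‖ ^ 2)
          + D' ^ 2 * α k ^ 2 + (4 * D' / n) * (α k * ∑ i, ‖z k i - zbar k‖)) := hsum
    _ = (‖zbar 0 - xstar‖ ^ 2 - ‖zbar (T+1) - xstar‖ ^ 2)
          + D' ^ 2 * ∑ k ∈ range (T+1), α k ^ 2
          + (4 * D' / n) * ∑ k ∈ range (T+1), α k * ∑ i, ‖z k i - zbar k‖ := by
        rw [Finset.sum_add_distrib, Finset.sum_add_distrib, htel, ← Finset.mul_sum,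
          ← Finset.mul_sum]
    _ ≤ _ := by
        have := sq_nonneg ‖zbar (T+1) - xstar‖
        linarith
end

section
/- Let $n \geq 1$, let $u = (\mathbf{1}_n; \mathbf{0}_n) \in \mathbb{R}^{2n}$ be the vector whose first $n$ entries are $1$ and last $n$ entries are $0$, and let $J = \frac{1}{n} u \mathbf{1}_{2n}^T \in \mathbb{R}^{2n \times 2n}$. Let $M_1, \dots, M_T \in \mathbb{R}^{2n \times 2n}$ be matrices such that for every $k$: (i) every column of $M_k$ sums to $1$, (ii) $M_k u = u$, and (iii) $\|M_k - J\|_2 \leq \sigma$ in operator $2$-norm. Then the $\infty$-norm (maximum absolute row sum) satisfies $\|M_T M_{T-1} \cdots M_1 - J\|_\infty \leq \sqrt{2n}\, \sigma^T$. -/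
open Finset

/-- Lemma 3(b) (Lemma 0(b) of the appendix): under the hypotheses of Lemma 12,
the ∞-norm (maximum absolute row sum) of the deviation of the product from the
consensus projector `J` is at most `√(2n) σ^T`; we state the bound for every
row, which is equivalent to the bound on the maximum. -/
theorem stmt_4 (n : ℕ) (hn : 1 ≤ n) (T : ℕ) (hT : 1 ≤ T) (σ : ℝ)
    (u : Fin (2 * n) → ℝ) (hu : ∀ i, u i = if (i : ℕ) < n then 1 else 0)
    (J : Matrix (Fin (2 * n)) (Fin (2 * n)) ℝ)
    (hJ : ∀ i j, J i j = (1 / n : ℝ) * u i)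
    (M : Fin T → Matrix (Fin (2 * n)) (Fin (2 * n)) ℝ)
    (hcol : ∀ k j, ∑ i, M k i j = 1)
    (hfix : ∀ k, (M k).mulVec u = u)
    (hnorm : ∀ k, ‖Matrix.toEuclideanCLM (𝕜 := ℝ) (M k - J)‖ ≤ σ) :
    ∀ i, ∑ j, |((List.ofFn M).reverse.prod - J) i j| ≤ Real.sqrt (2 * n) * σ ^ T := by
  classical
  have hnR : (n : ℝ) ≠ 0 := Nat.cast_ne_zero.mpr (by omega)
  have hσ : 0 ≤ σ := le_trans (norm_nonneg _) (hnorm ⟨0, hT⟩)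
  -- sum of u equals n
  have hsumu : ∑ i, u i = (n : ℝ) := by
    simp only [hu]
    rw [Finset.sum_boole]
    congr 1
    rw [Finset.card_filter]
    rw [Fin.sum_univ_eq_sum_range (fun i => if i < n then 1 else 0) (2 * n)]
    simp_rw [← Finset.mem_range]
    rw [Finset.sum_ite_mem]
    have : range (2 * n) ∩ range n = range n :=
      Finset.inter_eq_right.mpr (Finset.range_subset_range.mpr (by omega))
    simp [this]
  -- J absorbs column-stochastic matrices on the left
  have hJA : ∀ (A : Matrix (Fin (2 * n)) (Fin (2 * n)) ℝ),
      (∀ j, ∑ i, A i j = 1) → J * A = J := by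
    intro A hA
    ext i j
    simp only [Matrix.mul_apply, hJ]
    rw [← Finset.mul_sum, hA j, mul_one]
  -- J absorbs u-fixing matrices on the right
  have hAJ : ∀ (A : Matrix (Fin (2 * n)) (Fin (2 * n)) ℝ),
      A.mulVec u = u → A * J = J := by
    intro A hA
    ext i j
    have h1 : ∑ l, A i l * u l = u i := congrFun hA i
    simp only [Matrix.mul_apply, hJ]
    calc ∑ l, A i l * ((1 / (n : ℝ)) * u l)
        = (1 / (n : ℝ)) * ∑ l, A i l * u l := by
          rw [Finset.mul_sum]; exact Finset.sum_congr rfl fun l _ => by ring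
      _ = (1 / (n : ℝ)) * u i := by rw [h1]
  -- J is idempotent
  have hJu : J.mulVec u = u := by
    funext i
    simp only [Matrix.mulVec, dotProduct, hJ]
    rw [← Finset.mul_sum, hsumu]
    field_simp
  have hJJ : J * J = J := hAJ J hJu
  have hJM : ∀ k, J * M k = J := fun k => hJA (M k) (hcol k)
  have hMJ : ∀ k, M k * J = J := fun k => hAJ (M k) (hfix k)
  -- J absorbs arbitrary products of the M's on the left
  have hJprod : ∀ L : List (Matrix (Fin (2 * n)) (Fin (2 * n)) ℝ),
      (∀ A ∈ L, J * A = J) → J * L.prod = J := by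
    intro L
    induction L with
    | nil => intro _; simp
    | cons A L ih =>
      intro h
      rw [List.prod_cons, ← mul_assoc, h A (List.mem_cons_self),
        ih fun B hB => h B (List.mem_cons_of_mem A hB)]
  -- the telescoping identity
  have htel : ∀ L : List (Matrix (Fin (2 * n)) (Fin (2 * n)) ℝ),
      L ≠ [] → (∀ A ∈ L, J * A = J ∧ A * J = J) →
      L.prod - J = (L.map (· - J)).prod := by
    intro L
    induction L with
    | nil => intro h; exact absurd rfl h
    | cons A L ih =>
      intro _ h
      cases L with
      | nil => simp
      | cons B L' =>
        have hrest : ∀ C ∈ B :: L', J * C = J ∧ C * J = J := fun C hC =>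
          h C (List.mem_cons_of_mem A hC)
        have ihr := ih (List.cons_ne_nil B L') hrest
        rw [List.map_cons]
        conv_rhs => rw [List.prod_cons, ← ihr]
        rw [List.prod_cons]
        have hJp : J * (B :: L').prod = J := hJprod _ fun C hC => (hrest C hC).1
        have hAJ' : A * J = J := (h A (List.mem_cons_self)).2
        rw [sub_mul, mul_sub, mul_sub, hJp, hJJ, hAJ']
        abel
  -- norm bound on products of deviations
  have hnormprod : ∀ L : List (Matrix (Fin (2 * n)) (Fin (2 * n)) ℝ),
      (∀ A ∈ L, ‖Matrix.toEuclideanCLM (𝕜 := ℝ) (A - J)‖ ≤ σ) →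
      ‖Matrix.toEuclideanCLM (𝕜 := ℝ) ((L.map (· - J)).prod)‖ ≤ σ ^ L.length := by
    intro L
    induction L with
    | nil =>
      intro _
      rw [List.map_nil, List.prod_nil, map_one, List.length_nil, pow_zero,
        ContinuousLinearMap.one_def]
      exact ContinuousLinearMap.norm_id_le
    | cons A L ih =>
      intro h
      rw [List.map_cons, List.prod_cons, map_mul, List.length_cons, pow_succ']
      exact le_trans (norm_mul_le _ _)
        (mul_le_mul (h A (List.mem_cons_self))
          (ih fun B hB => h B (List.mem_cons_of_mem A hB)) (norm_nonneg _)
          hσ)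
  -- apply to our list
  set L : List (Matrix (Fin (2 * n)) (Fin (2 * n)) ℝ) := (List.ofFn M).reverse with hLdef
  have hmem : ∀ A ∈ L, ∃ k, A = M k := by
    intro A hA
    rw [hLdef, List.mem_reverse, List.mem_ofFn] at hA
    obtain ⟨k, hk⟩ := hA
    exact ⟨k, hk.symm⟩
  have hLne : L ≠ [] := by
    have : L.length = T := by simp [hLdef]
    intro h; rw [h] at this; simp at this; omega
  have hLlen : L.length = T := by simp [hLdef]
  have hP : L.prod - J = (L.map (· - J)).prod := by
    apply htel L hLne
    intro A hA
    obtain ⟨k, rfl⟩ := hmem A hA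
    exact ⟨hJM k, hMJ k⟩
  have hPnorm : ‖Matrix.toEuclideanCLM (𝕜 := ℝ) (L.prod - J)‖ ≤ σ ^ T := by
    rw [hP, ← hLlen]
    apply hnormprod
    intro A hA
    obtain ⟨k, rfl⟩ := hmem A hA
    exact hnorm k
  -- row-sum bound
  intro i
  set P : Matrix (Fin (2 * n)) (Fin (2 * n)) ℝ := L.prod - J with hPdef
  set r : EuclideanSpace ℝ (Fin (2 * n)) := (WithLp.equiv 2 _).symm (fun j => P i j) with hrdef
  have hrnorm : ‖r‖ = Real.sqrt (∑ j, (P i j) ^ 2) := by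
    rw [EuclideanSpace.norm_eq]
    congr 1
    exact Finset.sum_congr rfl fun j _ => by
      rw [hrdef]; simp [WithLp.equiv_symm_apply, PiLp.toLp_apply, sq_abs]
  have hrsq : ‖r‖ ^ 2 = ∑ j, (P i j) ^ 2 := by
    rw [hrnorm, Real.sq_sqrt (Finset.sum_nonneg fun j _ => sq_nonneg _)]
  -- key: the i-th coordinate of P applied to its own row is ‖r‖²
  have happly : (Matrix.toEuclideanCLM (𝕜 := ℝ) P r) i = ‖r‖ ^ 2 := by
    rw [hrsq, hrdef, WithLp.equiv_symm_apply, Matrix.toEuclideanCLM_toLp]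
    simp only [WithLp.ofLp_toLp, Matrix.toLin'_apply, Matrix.mulVec,
      dotProduct]
    exact Finset.sum_congr rfl fun j _ => by ring
  have hcoord : |(Matrix.toEuclideanCLM (𝕜 := ℝ) P r) i| ≤
      ‖Matrix.toEuclideanCLM (𝕜 := ℝ) P r‖ := by
    rw [EuclideanSpace.norm_eq]
    have : |(Matrix.toEuclideanCLM (𝕜 := ℝ) P r) i| =
        Real.sqrt ((Matrix.toEuclideanCLM (𝕜 := ℝ) P r) i ^ 2) := by
      rw [Real.sqrt_sq_eq_abs]
    rw [this]
    apply Real.sqrt_le_sqrt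
    have := Finset.single_le_sum (f := fun j => ‖(Matrix.toEuclideanCLM (𝕜 := ℝ) P r) j‖ ^ 2)
      (fun j _ => sq_nonneg _) (Finset.mem_univ i)
    simpa [sq_abs] using this
  have hrle : ‖r‖ ≤ σ ^ T := by
    rcases eq_or_lt_of_le (norm_nonneg r) with h0 | h0
    · rw [← h0]; positivity
    · have h1 : ‖r‖ ^ 2 ≤ ‖Matrix.toEuclideanCLM (𝕜 := ℝ) P‖ * ‖r‖ := by
        calc ‖r‖ ^ 2 = |(Matrix.toEuclideanCLM (𝕜 := ℝ) P r) i| := by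
              rw [happly, abs_of_nonneg (sq_nonneg _)]
          _ ≤ ‖Matrix.toEuclideanCLM (𝕜 := ℝ) P r‖ := hcoord
          _ ≤ ‖Matrix.toEuclideanCLM (𝕜 := ℝ) P‖ * ‖r‖ :=
              ContinuousLinearMap.le_opNorm _ _
      have h2 : ‖r‖ ≤ ‖Matrix.toEuclideanCLM (𝕜 := ℝ) P‖ := by
        rw [pow_two] at h1
        exact le_of_mul_le_mul_right (by linarith [h1]) h0
      exact le_trans h2 hPnorm
  -- Cauchy–Schwarz step
  have hCS : ∑ j, |P i j| ≤ Real.sqrt (2 * n) * ‖r‖ := by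
    have h1 : (∑ j, |P i j|) ^ 2 ≤ (2 * n : ℝ) * ∑ j, (P i j) ^ 2 := by
      have := sq_sum_le_card_mul_sum_sq (s := (univ : Finset (Fin (2 * n))))
        (f := fun j => |P i j|)
      simp only [Finset.card_univ, Fintype.card_fin, sq_abs] at this
      calc (∑ j, |P i j|) ^ 2 ≤ ((2 * n : ℕ) : ℝ) * ∑ j, (P i j) ^ 2 := by
            exact_mod_cast this
        _ = (2 * n : ℝ) * ∑ j, (P i j) ^ 2 := by push_cast; ring
    have h2 : ∑ j, |P i j| ≤ Real.sqrt ((2 * n : ℝ) * ∑ j, (P i j) ^ 2) := by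
      rw [← Real.sqrt_sq (Finset.sum_nonneg fun j _ => abs_nonneg _)]
      exact Real.sqrt_le_sqrt h1
    calc ∑ j, |P i j| ≤ Real.sqrt ((2 * n : ℝ) * ∑ j, (P i j) ^ 2) := h2
      _ = Real.sqrt (2 * n) * Real.sqrt (∑ j, (P i j) ^ 2) :=
          Real.sqrt_mul (by positivity) _
      _ = Real.sqrt (2 * n) * ‖r‖ := by rw [hrnorm]
  calc ∑ j, |P i j| ≤ Real.sqrt (2 * n) * ‖r‖ := hCS
    _ ≤ Real.sqrt (2 * n) * σ ^ T := by
        apply mul_le_mul_of_nonneg_left hrle (Real.sqrt_nonneg _)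
end

section
/- Let $n \geq 1$, $N = 2n$, $0 < \sigma < 1$, $\Gamma > 0$, $D \geq 0$. Let $J \in \mathbb{R}^{N \times N}$ be the matrix with $J_{ij} = 1/n$ for $1 \leq i \leq n$ and $J_{ij} = 0$ for $n+1 \leq i \leq N$ (all $j$). For integers $0 \leq r \leq s$ let $P(s{:}r) \in \mathbb{R}^{N \times N}$ be matrices such that every column of $P(s{:}r)$ sums to $1$ and $|[P(s{:}r)]_{ij} - J_{ij}| \leq \Gamma \sigma^{s-r+1}$ for all $i,j$. Let $\alpha_r \geq 0$, let $g^r \in \mathbb{R}^N$ satisfy $|g^r_j| \leq D$ for all $j$ and $g^r_j = 0$ for $j > n$, let $z^0 \in \mathbb{R}^N$, and for $k \geq 1$ define $z^k = P(k{-}1{:}0)\, z^0 - \sum_{r=1}^{k-1} \alpha_{r-1} P(k{-}1{:}r)\, g^{r-1} - \alpha_{k-1} g^{k-1}$ and $\bar z^k = \frac{1}{n}\sum_{j=1}^{N} z^k_j$. Then for every $k \geq 1$ and every $1 \leq i \leq n$: $|z^k_i - \bar z^k| \leq \Gamma \sigma^k \sum_{j=1}^{N} |z^0_j| + n \Gamma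 D \sum_{r=1}^{k-1} \sigma^{k-r} \alpha_{r-1} + 2 D \alpha_{k-1}$. -/
open Finset

/-- Lemma 3(a) of the paper in abstract form: the per-coordinate disagreement
bound `|z^k_i - z̄^k| ≤ Γ σ^k ∑_j |z^0_j| + n Γ D ∑_{r=1}^{k-1} σ^{k-r} α_{r-1}
+ 2 D α_{k-1}` for the first `n` coordinates, where `z^k` is the closed-form
solution of the sparsified decentralized update driven by products `P(s:r)` of
perturbed mixing matrices that deviate entrywise from the consensus projector
`J` geometrically and have columns summing to one. -/
theorem stmt_14 (n : ℕ) (hn : 1 ≤ n) (σ Γ D : ℝ)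
    (hσ0 : 0 < σ) (hσ1 : σ < 1) (hΓ : 0 < Γ) (hD : 0 ≤ D)
    (J : Matrix (Fin (2 * n)) (Fin (2 * n)) ℝ)
    (hJ : ∀ i j, J i j = if (i : ℕ) < n then (1 / n : ℝ) else 0)
    (P : ℕ → ℕ → Matrix (Fin (2 * n)) (Fin (2 * n)) ℝ)
    (hPcol : ∀ r s, r ≤ s → ∀ j, ∑ i, P s r i j = 1)
    (hPdev : ∀ r s, r ≤ s → ∀ i j, |P s r i j - J i j| ≤ Γ * σ ^ (s - r + 1))
    (α : ℕ → ℝ) (hα : ∀ r, 0 ≤ α r)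
    (g : ℕ → Fin (2 * n) → ℝ)
    (hgD : ∀ r j, |g r j| ≤ D)
    (hg0 : ∀ r (j : Fin (2 * n)), n ≤ (j : ℕ) → g r j = 0)
    (z0 : Fin (2 * n) → ℝ)
    (z : ℕ → Fin (2 * n) → ℝ)
    (hz : ∀ k, 1 ≤ k → z k = (P (k - 1) 0).mulVec z0
        - ∑ r ∈ Icc 1 (k - 1), α (r - 1) • (P (k - 1) r).mulVec (g (r - 1))
        - α (k - 1) • g (k - 1))
    (zbar : ℕ → ℝ) (hzbar : ∀ k, zbar k = (1 / n : ℝ) * ∑ j, z k j) :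
    ∀ k, 1 ≤ k → ∀ i : Fin (2 * n), (i : ℕ) < n →
      |z k i - zbar k| ≤ Γ * σ ^ k * ∑ j, |z0 j|
        + n * Γ * D * ∑ r ∈ Icc 1 (k - 1), σ ^ (k - r) * α (r - 1)
        + 2 * D * α (k - 1) := by
  intro k hk i hi
  have hn0 : (0:ℝ) < n := by exact_mod_cast hn
  have hσnn : 0 ≤ σ := le_of_lt hσ0
  -- sum of |g r| is at most n * D
  have hgsum : ∀ r, ∑ j, |g r j| ≤ n * D := by
    intro r
    calc ∑ j, |g r j| ≤ ∑ j : Fin (2*n), (if (j:ℕ) < n then D else 0) := by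
          apply Finset.sum_le_sum
          intro j _
          by_cases h : (j:ℕ) < n
          · simpa [h] using hgD r j
          · simp [h, hg0 r j (le_of_not_gt h)]
      _ = n * D := by
          rw [Fin.sum_univ_eq_sum_range (fun m => if m < n then D else (0:ℝ))]
          rw [← Finset.sum_filter]
          have hfil : (Finset.range (2*n)).filter (fun m => m < n) = Finset.range n := by
            ext m; simp [Finset.mem_filter]; omega
          rw [hfil, Finset.sum_const, Finset.card_range, nsmul_eq_mul]
  -- column sums
  have colsum : ∀ r s, r ≤ s → ∀ v : Fin (2*n) → ℝ,
      ∑ j, (P s r).mulVec v j = ∑ j, v j := by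
    intro r s hrs v
    simp only [Matrix.mulVec, dotProduct]
    rw [Finset.sum_comm]
    simp only [← Finset.sum_mul, hPcol r s hrs, one_mul]
  have hJi : ∀ j, J i j = (1/(n:ℝ)) := fun j => by rw [hJ]; simp [hi]
  -- key per-row deviation bound
  have key : ∀ r (v : Fin (2*n) → ℝ), r ≤ k - 1 →
      |(P (k-1) r).mulVec v i - (1/(n:ℝ)) * ∑ j, v j| ≤ Γ * σ^(k - r) * ∑ j, |v j| := by
    intro r v hr
    have hexp : (k-1) - r + 1 = k - r := by omega
    have hrw : (P (k-1) r).mulVec v i - (1/(n:ℝ)) * ∑ j, v j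
        = ∑ j, (P (k-1) r i j - J i j) * v j := by
      simp only [Matrix.mulVec, dotProduct, sub_mul, Finset.sum_sub_distrib, hJi]
      rw [Finset.mul_sum]
    rw [hrw]
    calc |∑ j, (P (k-1) r i j - J i j) * v j| ≤ ∑ j, |(P (k-1) r i j - J i j) * v j| :=
          Finset.abs_sum_le_sum_abs _ _
      _ ≤ ∑ j, Γ * σ^(k-r) * |v j| := by
          apply Finset.sum_le_sum; intro j _
          rw [abs_mul]
          apply mul_le_mul_of_nonneg_right _ (abs_nonneg _)
          calc |P (k-1) r i j - J i j| ≤ Γ * σ^((k-1)-r+1) := hPdev r (k-1) hr i j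
            _ = Γ * σ^(k-r) := by rw [hexp]
      _ = Γ * σ^(k-r) * ∑ j, |v j| := by rw [← Finset.mul_sum]
  have hzk := hz k hk
  -- sum of z k
  have hsumz : ∑ j, z k j = ∑ j, z0 j
      - ∑ r ∈ Icc 1 (k-1), α (r-1) * ∑ j, g (r-1) j
      - α (k-1) * ∑ j, g (k-1) j := by
    rw [hzk]
    simp only [Pi.sub_apply, Finset.sum_apply, Pi.smul_apply, smul_eq_mul]
    rw [Finset.sum_sub_distrib, Finset.sum_sub_distrib, colsum 0 (k-1) (Nat.zero_le _)]
    congr 1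
    · congr 1
      rw [Finset.sum_comm]
      apply Finset.sum_congr rfl
      intro r hr
      have hr' : r ≤ k - 1 := (Finset.mem_Icc.mp hr).2
      rw [← Finset.mul_sum, colsum r (k-1) hr']
    · rw [← Finset.mul_sum]
  -- decomposition of the difference
  have hΔ : z k i - zbar k
      = ((P (k-1) 0).mulVec z0 i - (1/(n:ℝ)) * ∑ j, z0 j)
        - (∑ r ∈ Icc 1 (k-1), α (r-1) *
            ((P (k-1) r).mulVec (g (r-1)) i - (1/(n:ℝ)) * ∑ j, g (r-1) j))
        - α (k-1) * (g (k-1) i - (1/(n:ℝ)) * ∑ j, g (k-1) j) := by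
    rw [hzbar, hsumz, hzk]
    simp only [Pi.sub_apply, Finset.sum_apply, Pi.smul_apply, smul_eq_mul]
    have e2 : ∑ r ∈ Icc 1 (k-1), α (r-1) *
        ((P (k-1) r).mulVec (g (r-1)) i - (1/(n:ℝ)) * ∑ j, g (r-1) j)
        = (∑ r ∈ Icc 1 (k-1), α (r-1) * (P (k-1) r).mulVec (g (r-1)) i)
          - (1/(n:ℝ)) * ∑ r ∈ Icc 1 (k-1), α (r-1) * ∑ j, g (r-1) j := by
      rw [Finset.mul_sum, ← Finset.sum_sub_distrib]
      apply Finset.sum_congr rfl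
      intro r _
      ring
    rw [e2]
    ring
  rw [hΔ]
  -- bound the three pieces
  have hA : |(P (k-1) 0).mulVec z0 i - (1/(n:ℝ)) * ∑ j, z0 j| ≤ Γ * σ^k * ∑ j, |z0 j| := by
    have := key 0 z0 (Nat.zero_le _)
    simpa using this
  have hB : |∑ r ∈ Icc 1 (k-1), α (r-1) *
        ((P (k-1) r).mulVec (g (r-1)) i - (1/(n:ℝ)) * ∑ j, g (r-1) j)|
      ≤ n * Γ * D * ∑ r ∈ Icc 1 (k-1), σ ^ (k - r) * α (r - 1) := by
    calc |∑ r ∈ Icc 1 (k-1), α (r-1) *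
          ((P (k-1) r).mulVec (g (r-1)) i - (1/(n:ℝ)) * ∑ j, g (r-1) j)|
        ≤ ∑ r ∈ Icc 1 (k-1), |α (r-1) *
          ((P (k-1) r).mulVec (g (r-1)) i - (1/(n:ℝ)) * ∑ j, g (r-1) j)| :=
          Finset.abs_sum_le_sum_abs _ _
      _ ≤ ∑ r ∈ Icc 1 (k-1), n * Γ * D * (σ ^ (k - r) * α (r - 1)) := by
          apply Finset.sum_le_sum
          intro r hr
          have hr' : r ≤ k - 1 := (Finset.mem_Icc.mp hr).2
          rw [abs_mul, abs_of_nonneg (hα (r-1))]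
          calc α (r-1) * |(P (k-1) r).mulVec (g (r-1)) i - (1/(n:ℝ)) * ∑ j, g (r-1) j|
              ≤ α (r-1) * (Γ * σ^(k-r) * (n * D)) := by
                apply mul_le_mul_of_nonneg_left _ (hα (r-1))
                calc |(P (k-1) r).mulVec (g (r-1)) i - (1/(n:ℝ)) * ∑ j, g (r-1) j|
                    ≤ Γ * σ^(k-r) * ∑ j, |g (r-1) j| := key r (g (r-1)) hr'
                  _ ≤ Γ * σ^(k-r) * (n * D) := by
                      apply mul_le_mul_of_nonneg_left (hgsum (r-1))
                      positivity
            _ = n * Γ * D * (σ ^ (k - r) * α (r - 1)) := by ring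
      _ = n * Γ * D * ∑ r ∈ Icc 1 (k-1), σ ^ (k - r) * α (r - 1) := by
          rw [← Finset.mul_sum]
  have hC : |α (k-1) * (g (k-1) i - (1/(n:ℝ)) * ∑ j, g (k-1) j)| ≤ 2 * D * α (k-1) := by
    rw [abs_mul, abs_of_nonneg (hα (k-1))]
    have h1 : |g (k-1) i - (1/(n:ℝ)) * ∑ j, g (k-1) j| ≤ 2 * D := by
      calc |g (k-1) i - (1/(n:ℝ)) * ∑ j, g (k-1) j|
          ≤ |g (k-1) i| + |(1/(n:ℝ)) * ∑ j, g (k-1) j| := abs_sub _ _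
        _ ≤ D + D := by
            apply add_le_add (hgD _ _)
            rw [abs_mul]
            have : |∑ j, g (k-1) j| ≤ n * D :=
              le_trans (Finset.abs_sum_le_sum_abs _ _) (hgsum (k-1))
            calc |1/(n:ℝ)| * |∑ j, g (k-1) j| ≤ (1/(n:ℝ)) * (n * D) := by
                  apply mul_le_mul _ this (abs_nonneg _) (by positivity)
                  rw [abs_of_nonneg (by positivity)]
              _ = D := by field_simp
        _ = 2 * D := by ring
    calc α (k-1) * |g (k-1) i - (1/(n:ℝ)) * ∑ j, g (k-1) j| ≤ α (k-1) * (2*D) :=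
          mul_le_mul_of_nonneg_left h1 (hα (k-1))
      _ = 2 * D * α (k-1) := by ring
  calc |((P (k-1) 0).mulVec z0 i - (1/(n:ℝ)) * ∑ j, z0 j)
        - (∑ r ∈ Icc 1 (k-1), α (r-1) *
            ((P (k-1) r).mulVec (g (r-1)) i - (1/(n:ℝ)) * ∑ j, g (r-1) j))
        - α (k-1) * (g (k-1) i - (1/(n:ℝ)) * ∑ j, g (k-1) j)|
      ≤ |((P (k-1) 0).mulVec z0 i - (1/(n:ℝ)) * ∑ j, z0 j)
        - (∑ r ∈ Icc 1 (k-1), α (r-1) *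
            ((P (k-1) r).mulVec (g (r-1)) i - (1/(n:ℝ)) * ∑ j, g (r-1) j))|
        + |α (k-1) * (g (k-1) i - (1/(n:ℝ)) * ∑ j, g (k-1) j)| := abs_sub _ _
    _ ≤ (|(P (k-1) 0).mulVec z0 i - (1/(n:ℝ)) * ∑ j, z0 j|
        + |∑ r ∈ Icc 1 (k-1), α (r-1) *
            ((P (k-1) r).mulVec (g (r-1)) i - (1/(n:ℝ)) * ∑ j, g (r-1) j)|)
        + |α (k-1) * (g (k-1) i - (1/(n:ℝ)) * ∑ j, g (k-1) j)| := by
        apply add_le_add_left (abs_sub _ _)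
    _ ≤ _ := by
        apply add_le_add (add_le_add hA hB) hC
end

section
/- Let $n \geq 1$, $N = 2n$, $0 < \sigma < 1$, $\Gamma > 0$, $D \geq 0$. Let $J \in \mathbb{R}^{N \times N}$ be the matrix with $J_{ij} = 1/n$ for $1 \leq i \leq n$ and $J_{ij} = 0$ for $n+1 \leq i \leq N$ (all $j$). For integers $0 \leq r \leq s$ let $P(s{:}r) \in \mathbb{R}^{N \times N}$ be matrices such that every column of $P(s{:}r)$ sums to $1$ and $|[P(s{:}r)]_{ij} - J_{ij}| \leq \Gamma \sigma^{s-r+1}$ for all $i,j$. Let $\alpha_r \geq 0$, let $g^r \in \mathbb{R}^N$ satisfy $|g^r_j| \leq D$ for all $j$ and $g^r_j = 0$ for $j > n$, let $z^0 \in \mathbb{R}^N$, and for $k \geq 1$ define $z^k = P(k{-}1{:}0)\, z^0 - \sum_{r=1}^{k-1} \alpha_{r-1} P(k{-}1{:}r)\, g^{r-1} - \alpha_{k-1} g^{k-1}$. Then for every $k \geq 1$ and every $n+1 \leq i \leq N$: $|z^k_i| \leq \Gamma \sigma^k \sum_{j=1}^{N} |z^0_j| + n \Gamma D \sum_{r=1}^{k-1}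 \sigma^{k-r} \alpha_{r-1}$. -/
open Finset

/-- Lemma 3(b) of the paper in abstract form: the vanishing-surplus bound
`|z^k_i| ≤ Γ σ^k ∑_j |z^0_j| + n Γ D ∑_{r=1}^{k-1} σ^{k-r} α_{r-1}` for the
surplus coordinates `i > n`, where `z^k` is the closed-form solution of the
sparsified decentralized update driven by products `P(s:r)` of perturbed mixing
matrices that deviate entrywise from the consensus projector `J` geometrically
and have columns summing to one. -/
theorem stmt_15 (n : ℕ) (hn : 1 ≤ n) (σ Γ D : ℝ)
    (hσ0 : 0 < σ) (hσ1 : σ < 1) (hΓ : 0 < Γ) (hD : 0 ≤ D)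
    (J : Matrix (Fin (2 * n)) (Fin (2 * n)) ℝ)
    (hJ : ∀ i j, J i j = if (i : ℕ) < n then (1 / n : ℝ) else 0)
    (P : ℕ → ℕ → Matrix (Fin (2 * n)) (Fin (2 * n)) ℝ)
    (hPcol : ∀ r s, r ≤ s → ∀ j, ∑ i, P s r i j = 1)
    (hPdev : ∀ r s, r ≤ s → ∀ i j, |P s r i j - J i j| ≤ Γ * σ ^ (s - r + 1))
    (α : ℕ → ℝ) (hα : ∀ r, 0 ≤ α r)
    (g : ℕ → Fin (2 * n) → ℝ)
    (hgD : ∀ r j, |g r j| ≤ D)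
    (hg0 : ∀ r (j : Fin (2 * n)), n ≤ (j : ℕ) → g r j = 0)
    (z0 : Fin (2 * n) → ℝ)
    (z : ℕ → Fin (2 * n) → ℝ)
    (hz : ∀ k, 1 ≤ k → z k = (P (k - 1) 0).mulVec z0
        - ∑ r ∈ Icc 1 (k - 1), α (r - 1) • (P (k - 1) r).mulVec (g (r - 1))
        - α (k - 1) • g (k - 1)) :
    ∀ k, 1 ≤ k → ∀ i : Fin (2 * n), n ≤ (i : ℕ) →
      |z k i| ≤ Γ * σ ^ k * ∑ j, |z0 j|
        + n * Γ * D * ∑ r ∈ Icc 1 (k - 1), σ ^ (k - r) * α (r - 1) := by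

  intro k hk i hi
  have hJi : ∀ j, J i j = 0 := fun j => by rw [hJ]; simp [Nat.not_lt.mpr hi]
  have hPi : ∀ r s, r ≤ s → ∀ j, |P s r i j| ≤ Γ * σ ^ (s - r + 1) := by
    intro r s hrs j
    have h := hPdev r s hrs i j
    rwa [hJi, sub_zero] at h
  have hσp : ∀ m : ℕ, 0 ≤ σ ^ m := fun m => pow_nonneg hσ0.le m
  have hgsum : ∀ r, ∑ j, |g r j| ≤ (n : ℝ) * D := by
    intro r
    calc ∑ j, |g r j| ≤ ∑ j : Fin (2*n), (if (j:ℕ) < n then D else 0) := by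
          apply Finset.sum_le_sum
          intro j _
          by_cases hj : (j:ℕ) < n
          · simpa [hj] using hgD r j
          · simp [hj, hg0 r j (Nat.le_of_not_lt hj)]
      _ = (n : ℝ) * D := by
          rw [Fin.sum_univ_eq_sum_range (fun j => if j < n then D else 0) (2*n)]
          rw [← Finset.sum_subset (Finset.range_subset_range.mpr (show n ≤ 2*n by omega))
              (fun x _ hx => by
                simp only [Finset.mem_range, not_lt] at hx
                simp [Nat.not_lt.mpr hx])]
          have : ∑ x ∈ Finset.range n, (if x < n then D else 0) = (n : ℝ) * D := by
            rw [Finset.sum_congr rfl (fun x hx => if_pos (Finset.mem_range.mp hx))]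
            simp [mul_comm]
          rw [this]
  rw [hz k hk]
  simp only [Pi.sub_apply, Pi.smul_apply, Finset.sum_apply, smul_eq_mul]
  rw [hg0 (k-1) i hi, mul_zero, sub_zero]
  have h1 : |(P (k-1) 0).mulVec z0 i| ≤ Γ * σ ^ k * ∑ j, |z0 j| := by
    have hk1 : (k - 1) - 0 + 1 = k := by omega
    calc |(P (k-1) 0).mulVec z0 i| = |∑ j, P (k-1) 0 i j * z0 j| := by
          simp [Matrix.mulVec, dotProduct]
      _ ≤ ∑ j, |P (k-1) 0 i j * z0 j| := Finset.abs_sum_le_sum_abs _ _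
      _ ≤ ∑ j, Γ * σ ^ k * |z0 j| := by
          apply Finset.sum_le_sum
          intro j _
          rw [abs_mul]
          have := hPi 0 (k-1) (Nat.zero_le _) j
          rw [hk1] at this
          exact mul_le_mul_of_nonneg_right this (abs_nonneg _)
      _ = Γ * σ ^ k * ∑ j, |z0 j| := by rw [Finset.mul_sum]
  have h2 : |∑ r ∈ Icc 1 (k-1), α (r-1) * (P (k-1) r).mulVec (g (r-1)) i|
      ≤ (n : ℝ) * Γ * D * ∑ r ∈ Icc 1 (k-1), σ ^ (k - r) * α (r - 1) := by
    calc |∑ r ∈ Icc 1 (k-1), α (r-1) * (P (k-1) r).mulVec (g (r-1)) i|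
        ≤ ∑ r ∈ Icc 1 (k-1), |α (r-1) * (P (k-1) r).mulVec (g (r-1)) i| :=
          Finset.abs_sum_le_sum_abs _ _
      _ ≤ ∑ r ∈ Icc 1 (k-1), (n : ℝ) * Γ * D * (σ ^ (k - r) * α (r - 1)) := by
          apply Finset.sum_le_sum
          intro r hr
          obtain ⟨hr1, hr2⟩ := Finset.mem_Icc.mp hr
          have hke : (k - 1) - r + 1 = k - r := by omega
          have hmv : |(P (k-1) r).mulVec (g (r-1)) i| ≤ Γ * σ ^ (k - r) * ((n:ℝ) * D) := by
            calc |(P (k-1) r).mulVec (g (r-1)) i| = |∑ j, P (k-1) r i j * g (r-1) j| := by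
                  simp [Matrix.mulVec, dotProduct]
              _ ≤ ∑ j, |P (k-1) r i j * g (r-1) j| := Finset.abs_sum_le_sum_abs _ _
              _ ≤ ∑ j, Γ * σ ^ (k - r) * |g (r-1) j| := by
                  apply Finset.sum_le_sum
                  intro j _
                  rw [abs_mul]
                  have := hPi r (k-1) hr2 j
                  rw [hke] at this
                  exact mul_le_mul_of_nonneg_right this (abs_nonneg _)
              _ = Γ * σ ^ (k - r) * ∑ j, |g (r-1) j| := by rw [Finset.mul_sum]
              _ ≤ Γ * σ ^ (k - r) * ((n:ℝ) * D) := by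
                  apply mul_le_mul_of_nonneg_left (hgsum (r-1))
                  positivity
          rw [abs_mul, abs_of_nonneg (hα (r-1))]
          calc α (r-1) * |(P (k-1) r).mulVec (g (r-1)) i|
              ≤ α (r-1) * (Γ * σ ^ (k - r) * ((n:ℝ) * D)) :=
                mul_le_mul_of_nonneg_left hmv (hα (r-1))
            _ = (n : ℝ) * Γ * D * (σ ^ (k - r) * α (r - 1)) := by ring
      _ = (n : ℝ) * Γ * D * ∑ r ∈ Icc 1 (k-1), σ ^ (k - r) * α (r - 1) := by
          rw [Finset.mul_sum]
  calc |(P (k-1) 0).mulVec z0 i - ∑ r ∈ Icc 1 (k-1), α (r-1) * (P (k-1) r).mulVec (g (r-1)) i|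
      ≤ |(P (k-1) 0).mulVec z0 i| + |∑ r ∈ Icc 1 (k-1), α (r-1) * (P (k-1) r).mulVec (g (r-1)) i| :=
        abs_sub _ _
    _ ≤ Γ * σ ^ k * ∑ j, |z0 j| + (n : ℝ) * Γ * D * ∑ r ∈ Icc 1 (k-1), σ ^ (k - r) * α (r - 1) :=
        add_le_add h1 h2
end
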